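/- Let K be a field of characteristic not 2, V a K-vector space of dimension 4, and Q a quadratic form on V. Then for every element x of the Clifford algebra of Q there exist s, d : K such that (x * reverse x) * (algebraMap s - x * reverse x) = algebraMap d. (This is the paper's four-dimensional determinant formula Det(A) = A⟦A⟧₂₃⟦A⟦A⟧₂₃⟧₁₄: since ξ := A⟦A⟧₂₃ = A·rev(A) has only grades {0,1,4}, the grade-negation ⟦ξ⟧₁₄ equals algebraMap s − ξ with s twice the grade-0 coefficient of ξ, and the theorem asserts the existence of such a scalar s making the product a scalar d.) -/

import Mathlib

open CliffordAlgebra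

section Aux
variable {K V : Type*} [Field K] [AddCommGroup V] [Module K V]
variable {Q : QuadraticForm K V}
variable (e : Fin 4 → CliffordAlgebra Q)

/-- product of e over a list -/
def eprod (l : List (Fin 4)) : CliffordAlgebra Q := (l.map e).prod

lemma eprod_nil : eprod e [] = 1 := rfl

lemma eprod_cons (i : Fin 4) (l : List (Fin 4)) :
    eprod e (i :: l) = e i * eprod e l := by simp [eprod]

lemma eprod_append (a b : List (Fin 4)) :
    eprod e (a ++ b) = eprod e a * eprod e b := by simp [eprod]

variable (q : Fin 4 → K)
variable (hswap : ∀ i j, i ≠ j → e i * e j = -(e j * e i))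
variable (hsq : ∀ i, e i * e i = algebraMap K (CliffordAlgebra Q) (q i))

include hswap hsq in
/-- moving a generator into a sorted product -/
lemma key_move : ∀ (l : List (Fin 4)), l.Pairwise (· < ·) → ∀ i : Fin 4,
    ∃ (c : K) (l' : List (Fin 4)), l'.Pairwise (· < ·) ∧
      (∀ x ∈ l', x = i ∨ x ∈ l) ∧
      e i * eprod e l = algebraMap K (CliffordAlgebra Q) c * eprod e l' := by
  intro l
  induction l with
  | nil =>
    intro _ i
    exact ⟨1, [i], List.pairwise_singleton _ i, by simp, by simp [eprod_nil, eprod_cons]⟩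
  | cons j t ih =>
    intro hs i
    have hts : t.Pairwise (· < ·) := hs.of_cons
    have hjt : ∀ x ∈ t, j < x := fun x hx => List.rel_of_pairwise_cons hs hx
    rcases lt_trichotomy i j with hij | hij | hij
    · refine ⟨1, i :: j :: t, ?_, by simp +contextual, by simp [eprod_cons]⟩
      refine List.pairwise_cons.2 ⟨?_, hs⟩
      intro b hb
      rcases List.mem_cons.1 hb with rfl | hb
      · exact hij
      · exact hij.trans (hjt _ hb)
    · subst hij
      refine ⟨q i, t, hts, fun x hx => Or.inr (by simp [hx]), ?_⟩
      rw [eprod_cons, ← mul_assoc, hsq]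
    · obtain ⟨c, l'', hl''s, hl''sub, hl''⟩ := ih hts i
      refine ⟨-c, j :: l'', ?_, ?_, ?_⟩
      · refine List.pairwise_cons.2 ⟨?_, hl''s⟩
        intro b hb
        rcases hl''sub b hb with rfl | hb'
        · exact hij
        · exact hjt _ hb'
      · intro x hx
        rcases List.mem_cons.1 hx with rfl | hx
        · exact Or.inr (by simp)
        · rcases hl''sub x hx with rfl | hx'
          · exact Or.inl rfl
          · exact Or.inr (by simp [hx'])
      · rw [eprod_cons, ← mul_assoc, hswap i j (ne_of_gt hij), eprod_cons,
          neg_mul, mul_assoc, hl'', map_neg, neg_mul, neg_inj,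
          ← mul_assoc, ← mul_assoc, Algebra.commutes]

/-- the span of sorted monomials -/
def sortedSpan : Submodule K (CliffordAlgebra Q) :=
  Submodule.span K {y | ∃ l : List (Fin 4), l.Pairwise (· < ·) ∧ y = eprod e l}

lemma eprod_mem_sortedSpan {l : List (Fin 4)} (hl : l.Pairwise (· < ·)) :
    eprod e l ∈ sortedSpan e :=
  Submodule.subset_span ⟨l, hl, rfl⟩

include hswap hsq in
lemma gen_mul_mem (i : Fin 4) {z : CliffordAlgebra Q} (hz : z ∈ sortedSpan e) :
    e i * z ∈ sortedSpan e := by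
  induction hz using Submodule.span_induction with
  | mem y hy =>
    obtain ⟨l, hl, rfl⟩ := hy
    obtain ⟨c, l', hl's, -, h⟩ := key_move e q hswap hsq l hl i
    rw [h, ← Algebra.smul_def]
    exact Submodule.smul_mem _ _ (eprod_mem_sortedSpan e hl's)
  | zero => simp
  | add y z _ _ hy hz => rw [mul_add]; exact Submodule.add_mem _ hy hz
  | smul c y _ hy => rw [mul_smul_comm]; exact Submodule.smul_mem _ _ hy

end Aux

section Aux2
variable {K V : Type*} [Field K] [AddCommGroup V] [Module K V]
variable {Q : QuadraticForm K V}
variable (e : Fin 4 → CliffordAlgebra Q) (q : Fin 4 → K)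
variable (hswap : ∀ i j, i ≠ j → e i * e j = -(e j * e i))
variable (hsq : ∀ i, e i * e i = algebraMap K (CliffordAlgebra Q) (q i))

include hswap in
lemma comm_notmem (i : Fin 4) :
    ∀ l : List (Fin 4), i ∉ l →
      e i * eprod e l = ((-1 : K) ^ l.length) • (eprod e l * e i) := by
  intro l
  induction l with
  | nil => intro _; simp [eprod_nil]
  | cons j t ih =>
    intro hi
    have hij : i ≠ j := fun h => hi (h ▸ List.mem_cons_self)
    have hit : i ∉ t := fun h => hi (List.mem_cons_of_mem _ h)
    simp only [eprod_cons, List.length_cons]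
    calc e i * (e j * eprod e t) = (e i * e j) * eprod e t := by rw [mul_assoc]
      _ = -(e j * (e i * eprod e t)) := by rw [hswap i j hij, neg_mul, mul_assoc]
      _ = -(e j * (((-1 : K) ^ t.length) • (eprod e t * e i))) := by rw [ih hit]
      _ = ((-1 : K) ^ (t.length + 1)) • (e j * eprod e t * e i) := by
          rw [mul_smul_comm, pow_succ, mul_neg_one, neg_smul, mul_assoc]

include hswap in
lemma comm_notmem' (i : Fin 4) (l : List (Fin 4)) (hi : i ∉ l) :
    eprod e l * e i = ((-1 : K) ^ l.length) • (e i * eprod e l) := by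
  rw [comm_notmem e hswap i l hi, smul_smul, ← pow_add, ← two_mul, pow_mul,
    neg_one_sq, one_pow, one_smul]

include hswap in
lemma eprod_reverse (l : List (Fin 4)) (hl : l.Nodup) :
    eprod e l.reverse = ((-1 : K) ^ (l.length.choose 2)) • eprod e l := by
  induction l with
  | nil => simp
  | cons j t ih =>
    have hjt : j ∉ t := (List.nodup_cons.1 hl).1
    have htn : t.Nodup := (List.nodup_cons.1 hl).2
    rw [List.reverse_cons, eprod_append, ih htn, smul_mul_assoc,
      eprod_cons, eprod_nil, mul_one, comm_notmem' e hswap j t hjt,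
      smul_smul, ← pow_add, eprod_cons, List.length_cons]
    congr 2
    have : (t.length + 1).choose 2 = t.length.choose 1 + t.length.choose 2 :=
      Nat.choose_succ_succ t.length 1
    rw [this, Nat.choose_one_right, Nat.add_comm]

include hsq in
lemma eprod_mul_reverse (l : List (Fin 4)) :
    eprod e l * eprod e l.reverse = algebraMap K (CliffordAlgebra Q) ((l.map q).prod) := by
  induction l with
  | nil => simp [eprod_nil]
  | cons j t ih =>
    rw [List.reverse_cons, eprod_append, eprod_cons, eprod_cons, eprod_nil, mul_one,
      List.map_cons, List.prod_cons]
    calc e j * eprod e t * (eprod e t.reverse * e j)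
        = e j * (eprod e t * eprod e t.reverse) * e j := by
          rw [mul_assoc, mul_assoc, mul_assoc]
      _ = e j * algebraMap K (CliffordAlgebra Q) ((t.map q).prod) * e j := by rw [ih]
      _ = algebraMap K (CliffordAlgebra Q) ((t.map q).prod) * (e j * e j) := by
          rw [← Algebra.commutes, mul_assoc]
      _ = _ := by rw [hsq, ← map_mul, mul_comm]

include hswap hsq in
lemma anticomm_gen (i : Fin 4) (l1 l2 : List (Fin 4)) (h1 : i ∉ l1) (h2 : i ∉ l2)
    (hlen : l1.length + l2.length = 3) :
    e i * eprod e (l1 ++ i :: l2) + eprod e (l1 ++ i :: l2) * e i = 0 := by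
  have key : eprod e (l1 ++ i :: l2) = eprod e l1 * (e i * eprod e l2) := by
    rw [eprod_append, eprod_cons]
  have hA : e i * eprod e (l1 ++ i :: l2)
      = ((-1 : K) ^ l1.length * q i) • (eprod e l1 * eprod e l2) := by
    rw [key, ← mul_assoc, comm_notmem e hswap i l1 h1, smul_mul_assoc, mul_assoc,
      ← mul_assoc (e i), hsq, ← Algebra.smul_def, mul_smul_comm, smul_smul]
  have hB : eprod e (l1 ++ i :: l2) * e i
      = ((-1 : K) ^ l2.length * q i) • (eprod e l1 * eprod e l2) := by
    rw [key, mul_assoc, mul_assoc, comm_notmem' e hswap i l2 h2, mul_smul_comm,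
      ← mul_assoc (e i), hsq, ← Algebra.smul_def, smul_smul, mul_smul_comm]
  rw [hA, hB, ← add_smul]
  have h0 : (-1 : K) ^ l1.length * q i + (-1 : K) ^ l2.length * q i = 0 := by
    rcases Nat.even_or_odd l1.length with he | ho
    · have h2o : Odd l2.length := by
        rw [Nat.odd_iff]; rw [Nat.even_iff] at he; omega
      rw [he.neg_one_pow, h2o.neg_one_pow]; ring
    · have h2e : Even l2.length := by
        rw [Nat.even_iff]; rw [Nat.odd_iff] at ho; omega
      rw [ho.neg_one_pow, h2e.neg_one_pow]; ring
  rw [h0, zero_smul]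

end Aux2

section Aux3
variable {K V : Type*} [Field K] [AddCommGroup V] [Module K V]
variable {Q : QuadraticForm K V}
variable (e : Fin 4 → CliffordAlgebra Q) (q : Fin 4 → K)
variable (hswap : ∀ i j, i ≠ j → e i * e j = -(e j * e i))
variable (hsq : ∀ i, e i * e i = algebraMap K (CliffordAlgebra Q) (q i))

include hswap hsq in
lemma mul_mem_sortedSpan (hιe : ∀ m : V, ι Q m ∈ Submodule.span K (Set.range e))
    (a : CliffordAlgebra Q) :
    ∀ z ∈ sortedSpan e, a * z ∈ sortedSpan e := by
  induction a using CliffordAlgebra.induction with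
  | algebraMap r =>
    intro z hz
    rw [← Algebra.smul_def]
    exact Submodule.smul_mem _ _ hz
  | ι m =>
    intro z hz
    have hgen : ∀ w ∈ Submodule.span K (Set.range e), w * z ∈ sortedSpan e := by
      intro w hw
      induction hw using Submodule.span_induction with
      | mem y hy =>
        obtain ⟨i, rfl⟩ := hy
        exact gen_mul_mem e q hswap hsq i hz
      | zero => simp
      | add u w _ _ hu hw => rw [add_mul]; exact Submodule.add_mem _ hu hw
      | smul c u _ hu => rw [smul_mul_assoc]; exact Submodule.smul_mem _ _ hu
    exact hgen _ (hιe m)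
  | add a b ha hb =>
    intro z hz
    rw [add_mul]; exact Submodule.add_mem _ (ha z hz) (hb z hz)
  | mul a b ha hb =>
    intro z hz
    rw [mul_assoc]; exact ha _ (hb z hz)

include hswap hsq in
lemma mem_sortedSpan (hιe : ∀ m : V, ι Q m ∈ Submodule.span K (Set.range e))
    (x : CliffordAlgebra Q) : x ∈ sortedSpan e := by
  have h1 : (1 : CliffordAlgebra Q) ∈ sortedSpan e :=
    (eprod_nil e) ▸ eprod_mem_sortedSpan e List.Pairwise.nil
  induction x using CliffordAlgebra.induction with
  | algebraMap r =>
    rw [Algebra.algebraMap_eq_smul_one]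
    exact Submodule.smul_mem _ _ h1
  | ι m =>
    refine Submodule.span_le.2 ?_ (hιe m)
    rintro y ⟨i, rfl⟩
    exact Submodule.subset_span ⟨[i], List.pairwise_singleton _ i, by simp [eprod]⟩
  | add a b ha hb => exact Submodule.add_mem _ ha hb
  | mul a b ha hb => exact mul_mem_sortedSpan e q hswap hsq hιe a b hb

lemma reverse_eprod (hrev : ∀ i, reverse (e i) = e i) (l : List (Fin 4)) :
    reverse (eprod e l) = eprod e l.reverse := by
  induction l with
  | nil => simp [eprod_nil]
  | cons j t ih =>
    rw [eprod_cons, reverse.map_mul, ih, hrev, List.reverse_cons, eprod_append]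
    simp [eprod]

end Aux3

theorem det_dim_four_second (K V : Type*) [Field K] [AddCommGroup V] [Module K V]
    [FiniteDimensional K V] (h2 : (2 : K) ≠ 0)
    (hdim : Module.finrank K V = 4)
    (Q : QuadraticForm K V) (x : CliffordAlgebra Q) :
    ∃ s d : K,
      (x * reverse x) * (algebraMap K (CliffordAlgebra Q) s - x * reverse x) =
        algebraMap K (CliffordAlgebra Q) d := by
  haveI : Invertible (2 : K) := invertibleOfNonzero h2
  obtain ⟨v0, hv0⟩ := LinearMap.BilinForm.exists_orthogonal_basis
    (QuadraticForm.associated_isSymm K Q)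
  set v : Module.Basis (Fin 4) K V := v0.reindex (finCongr hdim) with hv
  have hortho : ∀ i j : Fin 4, i ≠ j → Q.IsOrtho (v i) (v j) := by
    intro i j hij
    have hne : (finCongr hdim).symm i ≠ (finCongr hdim).symm j := fun h => hij (by
      simpa using congrArg (finCongr hdim) h)
    have := hv0 hne
    rw [hv]
    simp only [Module.Basis.reindex_apply]
    exact QuadraticMap.associated_isOrtho.mp this
  set e : Fin 4 → CliffordAlgebra Q := fun i => ι Q (v i) with he
  set q : Fin 4 → K := fun i => Q (v i) with hq
  have hswap : ∀ i j, i ≠ j → e i * e j = -(e j * e i) := fun i j hij =>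
    ι_mul_ι_comm_of_isOrtho (hortho i j hij)
  have hsq : ∀ i, e i * e i = algebraMap K (CliffordAlgebra Q) (q i) := fun i =>
    ι_sq_scalar Q (v i)
  have hrev : ∀ i, reverse (e i) = e i := fun i => reverse_ι (v i)
  have hιe : ∀ m : V, ι Q m ∈ Submodule.span K (Set.range e) := by
    intro m
    have hm : m ∈ Submodule.span K (Set.range v) := by rw [v.span_eq]; trivial
    induction hm using Submodule.span_induction with
    | mem y hy => obtain ⟨i, rfl⟩ := hy; exact Submodule.subset_span ⟨i, rfl⟩
    | zero => simp
    | add y z _ _ hy hz => rw [map_add]; exact Submodule.add_mem _ hy hz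
    | smul c y _ hy => rw [map_smul]; exact Submodule.smul_mem _ _ hy
  set ω : CliffordAlgebra Q := eprod e [0, 1, 2, 3] with hω
  set W : Submodule K (CliffordAlgebra Q) :=
    Submodule.span K {(1 : CliffordAlgebra Q)} ⊔ LinearMap.range (ι Q) ⊔
      Submodule.span K {ω} with hW
  -- symmetrized monomials lie in W
  have hsymW : ∀ l : List (Fin 4), l.Pairwise (· < ·) →
      eprod e l + reverse (eprod e l) ∈ W := by
    intro l hl
    rw [reverse_eprod e hrev, eprod_reverse e hswap l hl.nodup]
    have h1W : (1 : CliffordAlgebra Q) ∈ W :=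
      Submodule.mem_sup_left (Submodule.mem_sup_left (Submodule.subset_span rfl))
    have hωW : ω ∈ W := Submodule.mem_sup_right (Submodule.subset_span rfl)
    have heW : ∀ i, e i ∈ W := fun i =>
      Submodule.mem_sup_left (Submodule.mem_sup_right ⟨v i, rfl⟩)
    rcases l with _ | ⟨a, _ | ⟨b, _ | ⟨c, _ | ⟨d, _ | ⟨e5, t⟩⟩⟩⟩⟩
    · have hc : ((-1 : K) ^ (List.length ([] : List (Fin 4))).choose 2) = 1 := by norm_num
      rw [hc, one_smul]
      exact add_mem ((eprod_nil e) ▸ h1W) ((eprod_nil e) ▸ h1W)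
    · have hc : ((-1 : K) ^ ([a] : List (Fin 4)).length.choose 2) = 1 := by norm_num
      rw [hc, one_smul]
      have : eprod e [a] = e a := by simp [eprod]
      rw [this]
      exact add_mem (heW a) (heW a)
    · have hc : ((-1 : K) ^ ([a, b] : List (Fin 4)).length.choose 2) = -1 := by norm_num
      rw [hc, neg_one_smul, add_neg_cancel]
      exact zero_mem W
    · have hc : ((-1 : K) ^ ([a, b, c] : List (Fin 4)).length.choose 2) = -1 := by norm_num
      rw [hc, neg_one_smul, add_neg_cancel]
      exact zero_mem W
    · have hc : ((-1 : K) ^ ([a, b, c, d] : List (Fin 4)).length.choose 2) = 1 := by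
        rw [show (([a, b, c, d] : List (Fin 4)).length.choose 2) = 6 from rfl]; norm_num
      rw [hc, one_smul]
      have habcd : a = 0 ∧ b = 1 ∧ c = 2 ∧ d = 3 := by
        have key : ∀ a b c d : Fin 4, a < b → b < c → c < d →
            a = 0 ∧ b = 1 ∧ c = 2 ∧ d = 3 := by decide
        simp only [List.pairwise_cons, List.mem_cons, List.mem_singleton] at hl
        exact key a b c d (hl.1 b (by simp)) (hl.2.1 c (by simp)) (hl.2.2.1 d (by simp))
      obtain ⟨rfl, rfl, rfl, rfl⟩ := habcd
      exact add_mem hωW hωW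
    · exfalso
      have hle := List.Nodup.length_le_card hl.nodup
      simp only [List.length_cons, Fintype.card_fin] at hle
      omega
  -- ξ lies in W
  set ξ : CliffordAlgebra Q := x * reverse x with hξ
  have hrevξ : reverse ξ = ξ := by rw [hξ, reverse.map_mul, reverse_reverse]
  have hsymgen : ∀ y ∈ sortedSpan e, y + reverse y ∈ W := by
    intro y0 hy0
    induction hy0 using Submodule.span_induction with
    | mem y hy =>
      obtain ⟨l, hl, rfl⟩ := hy
      exact hsymW l hl
    | zero => simp
    | add y z _ _ hy hz =>
      have hr : (y + z) + reverse (y + z) = (y + reverse y) + (z + reverse z) := by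
        rw [map_add]; abel
      rw [hr]; exact add_mem hy hz
    | smul c y _ hy =>
      have hr : c • y + reverse (c • y) = c • (y + reverse y) := by
        rw [map_smul, smul_add]
      rw [hr]; exact Submodule.smul_mem _ _ hy
  have hsymξ : ξ + reverse ξ ∈ W := hsymgen ξ (mem_sortedSpan e q hswap hsq hιe ξ)
  have hξW : ξ ∈ W := by
    have : ξ = (⅟(2 : K)) • (ξ + reverse ξ) := by
      rw [hrevξ, ← two_smul K ξ, invOf_smul_smul]
    rw [this]
    exact Submodule.smul_mem _ _ hsymξ
  -- decompose ξ
  rw [hW] at hξW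
  rcases Submodule.mem_sup.1 hξW with ⟨y, hy, z, hz, hsum⟩
  rcases Submodule.mem_sup.1 hy with ⟨y1, hy1, y2, hy2, rfl⟩
  obtain ⟨a, rfl⟩ := Submodule.mem_span_singleton.1 hy1
  obtain ⟨c, rfl⟩ := Submodule.mem_span_singleton.1 hz
  obtain ⟨m, rfl⟩ := hy2
  set u : CliffordAlgebra Q := ι Q m + c • ω with hu
  have hξdecomp : ξ = algebraMap K (CliffordAlgebra Q) a + u := by
    rw [← hsum, hu, Algebra.algebraMap_eq_smul_one]; abel
  -- ω * ω is a scalar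
  set qq : K := (([0, 1, 2, 3] : List (Fin 4)).map q).prod with hqq
  have hω2 : ω * ω = algebraMap K (CliffordAlgebra Q) qq := by
    have h1 := eprod_mul_reverse e q hsq [0, 1, 2, 3]
    have h2' := eprod_reverse e hswap [0, 1, 2, 3] (by decide)
    have hc : ((-1 : K) ^ ([0, 1, 2, 3] : List (Fin 4)).length.choose 2) = 1 := by
      rw [show (([0, 1, 2, 3] : List (Fin 4)).length.choose 2) = 6 from rfl]; norm_num
    rw [hc, one_smul] at h2'
    rw [h2'] at h1
    exact h1
  -- anticommutation of vectors with ω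
  have hgen : ∀ i : Fin 4, e i * ω + ω * e i = 0 := by
    intro i
    fin_cases i
    · exact anticomm_gen e q hswap hsq 0 [] [1, 2, 3] (by decide) (by decide) rfl
    · exact anticomm_gen e q hswap hsq 1 [0] [2, 3] (by decide) (by decide) rfl
    · exact anticomm_gen e q hswap hsq 2 [0, 1] [3] (by decide) (by decide) rfl
    · exact anticomm_gen e q hswap hsq 3 [0, 1, 2] [] (by decide) (by decide) rfl
  have hanti : ∀ m' : V, ι Q m' * ω + ω * ι Q m' = 0 := by
    intro m'
    have hm : m' ∈ Submodule.span K (Set.range v) := by rw [v.span_eq]; trivial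
    induction hm using Submodule.span_induction with
    | mem y hy => obtain ⟨i, rfl⟩ := hy; exact hgen i
    | zero => simp
    | add y z _ _ hy hz =>
      calc ι Q (y + z) * ω + ω * ι Q (y + z)
          = (ι Q y * ω + ω * ι Q y) + (ι Q z * ω + ω * ι Q z) := by
            rw [map_add, add_mul, mul_add]; abel
        _ = 0 := by rw [hy, hz, add_zero]
    | smul r y _ hy =>
      rw [map_smul, smul_mul_assoc, mul_smul_comm, ← smul_add, hy, smul_zero]
  -- u * u is a scalar
  have hu2 : u * u = algebraMap K (CliffordAlgebra Q) (Q m + c * c * qq) := by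
    calc u * u
        = ι Q m * ι Q m + (c • (ι Q m * ω + ω * ι Q m) + (c * c) • (ω * ω)) := by
          rw [hu]
          simp only [mul_add, add_mul, smul_mul_assoc, mul_smul_comm, smul_smul, smul_add]
          abel
      _ = algebraMap K (CliffordAlgebra Q) (Q m)
            + (c • (0 : CliffordAlgebra Q)
              + (c * c) • algebraMap K (CliffordAlgebra Q) qq) := by
          rw [ι_sq_scalar, hanti m, hω2]
      _ = algebraMap K (CliffordAlgebra Q) (Q m + c * c * qq) := by
          rw [smul_zero, zero_add, map_add, map_mul, Algebra.smul_def]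
  -- conclude
  refine ⟨a + a, a * a - (Q m + c * c * qq), ?_⟩
  have hstep : algebraMap K (CliffordAlgebra Q) (a + a) - ξ
      = algebraMap K (CliffordAlgebra Q) a - u := by
    rw [hξdecomp, map_add]; abel
  calc ξ * (algebraMap K (CliffordAlgebra Q) (a + a) - ξ)
      = (algebraMap K (CliffordAlgebra Q) a + u)
        * (algebraMap K (CliffordAlgebra Q) a - u) := by rw [hstep, ← hξdecomp]
    _ = algebraMap K (CliffordAlgebra Q) a * algebraMap K (CliffordAlgebra Q) a
        - u * u := by
        rw [add_mul, mul_sub, mul_sub, Algebra.commutes a u]; abel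
    _ = algebraMap K (CliffordAlgebra Q) (a * a - (Q m + c * c * qq)) := by
        rw [hu2, ← map_mul, ← map_sub]
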